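/- Let μ be the inverse of λ, i.e. the unique family of complex numbers μ^A_D (A ∈ {0,…,2n}, D ranging over the column symbols 0, α, ᾱ) satisfying Σ_D λ^D_C μ^A_D = δ^A_C for all A, C ∈ {0,…,2n}. Then μ is given explicitly in terms of the inverse of F by: μ^A_0 = (1/(n+2)) F^{A,2n+2} + Σ_{B=0}^{2n} F^{AB} σ_B, μ^A_α = Σ_{B=0}^{2n} Σ_{β=1}^{n} F^{AB} g_{αβ̄} λ^{β̄}_B, and μ^A_{β̄} = Σ_{B=0}^{2n} Σ_{α=1}^{n} F^{AB} g_{αβ̄} λ^α_B. -/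
import Mathlib


open scoped Matrix

/-- Column index type for the matrix `λ`: the symbol `0`, the holomorphic symbols `α`
(`1 ≤ α ≤ n`) and the antiholomorphic symbols `ᾱ` (`1 ≤ α ≤ n`). -/
abbrev FefCol (n : ℕ) := Unit ⊕ Fin n ⊕ Fin n

/-- The column symbol `0`. -/
def col0 {n : ℕ} : FefCol n := Sum.inl ()

/-- The column symbol `α`. -/
def colH {n : ℕ} (α : Fin n) : FefCol n := Sum.inr (Sum.inl α)

/-- The column symbol `ᾱ`. -/
def colA {n : ℕ} (α : Fin n) : FefCol n := Sum.inr (Sum.inr α)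

theorem lambda_inverse_via_fefferman_inverse (n : ℕ) (hn : 1 ≤ n)
    (g : Matrix (Fin n) (Fin n) ℂ) (hg : IsUnit g)
    (lam : Matrix (Fin (2*n+1)) (FefCol n) ℂ)
    (hlam : ∃ mu : Matrix (FefCol n) (Fin (2*n+1)) ℂ, lam * mu = 1 ∧ mu * lam = 1)
    (σ : Fin (2*n+1) → ℂ)
    (F : Matrix (Fin (2*n+1+1)) (Fin (2*n+1+1)) ℂ)
    (hF1 : ∀ A B : Fin (2*n+1), F A.castSucc B.castSucc
      = (∑ α, ∑ β, g α β * (lam A (colH α) * lam B (colA β)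
          + lam B (colH α) * lam A (colA β)))
        + lam A col0 * σ B + lam B col0 * σ A)
    (hF2 : ∀ A : Fin (2*n+1), F A.castSucc (Fin.last (2*n+1)) = lam A col0 / ((n : ℂ) + 2))
    (hF3 : ∀ A : Fin (2*n+1), F (Fin.last (2*n+1)) A.castSucc = lam A col0 / ((n : ℂ) + 2))
    (hF4 : F (Fin.last (2*n+1)) (Fin.last (2*n+1)) = 0)
    (hFinv : IsUnit F)
    (mu : Fin (2*n+1) → FefCol n → ℂ)
    (hmu : ∀ A C : Fin (2*n+1),
      (∑ D : FefCol n, lam C D * mu A D) = if A = C then 1 else 0)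
    (A : Fin (2*n+1)) :
    (mu A col0 = (1 / ((n : ℂ) + 2)) * F⁻¹ A.castSucc (Fin.last (2*n+1))
        + ∑ B : Fin (2*n+1), F⁻¹ A.castSucc B.castSucc * σ B)
    ∧ (∀ α : Fin n, mu A (colH α)
        = ∑ B : Fin (2*n+1), ∑ β : Fin n,
            F⁻¹ A.castSucc B.castSucc * g α β * lam B (colA β))
    ∧ (∀ β : Fin n, mu A (colA β)
        = ∑ B : Fin (2*n+1), ∑ α : Fin n,
            F⁻¹ A.castSucc B.castSucc * g α β * lam B (colH α)) := by

  classical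
  obtain ⟨mu0, hmu0l, hmu0r⟩ := hlam
  have hdet : IsUnit F.det := (Matrix.isUnit_iff_isUnit_det F).mp hFinv
  have hFinvF : F⁻¹ * F = 1 := Matrix.nonsing_inv_mul F hdet
  have hn2 : ((n:ℂ) + 2) ≠ 0 := by
    have h : ((n:ℂ) + 2) = ((n + 2 : ℕ) : ℂ) := by push_cast; ring
    rw [h, Ne, Nat.cast_eq_zero]
    omega
  have key2 : ∀ A' : Fin (2*n+1),
      ∑ B : Fin (2*n+1), F⁻¹ A'.castSucc B.castSucc * lam B col0 = 0 := by
    intro A'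
    have h0 : (F⁻¹ * F) A'.castSucc (Fin.last (2*n+1)) = 0 := by
      rw [hFinvF, Matrix.one_apply_ne (Fin.castSucc_lt_last A').ne]
    rw [Matrix.mul_apply, Fin.sum_univ_castSucc] at h0
    simp only [hF2, hF4, mul_zero, add_zero] at h0
    have h1 := congrArg (· * ((n:ℂ)+2)) h0
    simp only [Finset.sum_mul, zero_mul] at h1
    calc ∑ B : Fin (2*n+1), F⁻¹ A'.castSucc B.castSucc * lam B col0
        = ∑ B : Fin (2*n+1),
            F⁻¹ A'.castSucc B.castSucc * (lam B col0 / ((n:ℂ)+2)) * ((n:ℂ)+2) := by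
          refine Finset.sum_congr rfl fun B _ => ?_
          field_simp
      _ = 0 := h1
  have key1 : ∀ A' C : Fin (2*n+1),
      (∑ B : Fin (2*n+1), F⁻¹ A'.castSucc B.castSucc * F B.castSucc C.castSucc)
        = (if C = A' then 1 else 0)
          - F⁻¹ A'.castSucc (Fin.last (2*n+1)) * (lam C col0 / ((n:ℂ)+2)) := by
    intro A' C
    have h0 : (F⁻¹ * F) A'.castSucc C.castSucc = if C = A' then 1 else 0 := by
      rw [hFinvF, Matrix.one_apply]
      simp [Fin.castSucc_inj, eq_comm]
    rw [Matrix.mul_apply, Fin.sum_univ_castSucc, hF3] at h0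
    linear_combination h0
  set M : Matrix (FefCol n) (Fin (2*n+1)) ℂ := Matrix.of fun D A' =>
    match D with
    | Sum.inl _ => (1 / ((n : ℂ) + 2)) * F⁻¹ A'.castSucc (Fin.last (2*n+1))
        + ∑ B : Fin (2*n+1), F⁻¹ A'.castSucc B.castSucc * σ B
    | Sum.inr (Sum.inl α) => ∑ B : Fin (2*n+1), ∑ β : Fin n,
        F⁻¹ A'.castSucc B.castSucc * g α β * lam B (colA β)
    | Sum.inr (Sum.inr β) => ∑ B : Fin (2*n+1), ∑ α : Fin n,
        F⁻¹ A'.castSucc B.castSucc * g α β * lam B (colH α) with hMdef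
  have hM : lam * M = 1 := by
    ext C A'
    rw [Matrix.mul_apply, Fintype.sum_sum_type, Fintype.sum_sum_type]
    simp only [hMdef, Matrix.of_apply, Finset.univ_unique, Finset.sum_singleton]
    rw [show (Sum.inl default : FefCol n) = col0 from rfl]
    -- swap the sums and regroup
    have e1 : ∑ α : Fin n, lam C (Sum.inr (Sum.inl α)) *
        (∑ B : Fin (2*n+1), ∑ β : Fin n,
          F⁻¹ A'.castSucc B.castSucc * g α β * lam B (colA β))
        = ∑ B : Fin (2*n+1), F⁻¹ A'.castSucc B.castSucc *
            (∑ α : Fin n, ∑ β : Fin n,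
              g α β * (lam C (colH α) * lam B (colA β))) := by
      simp only [Finset.mul_sum]
      rw [Finset.sum_comm]
      refine Finset.sum_congr rfl fun B _ => Finset.sum_congr rfl fun α _ =>
        Finset.sum_congr rfl fun β _ => ?_
      simp only [colH]
      ring
    have e2 : ∑ β : Fin n, lam C (Sum.inr (Sum.inr β)) *
        (∑ B : Fin (2*n+1), ∑ α : Fin n,
          F⁻¹ A'.castSucc B.castSucc * g α β * lam B (colH α))
        = ∑ B : Fin (2*n+1), F⁻¹ A'.castSucc B.castSucc *
            (∑ α : Fin n, ∑ β : Fin n,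
              g α β * (lam B (colH α) * lam C (colA β))) := by
      simp only [Finset.mul_sum]
      rw [Finset.sum_comm]
      refine Finset.sum_congr rfl fun B _ => ?_
      rw [Finset.sum_comm]
      refine Finset.sum_congr rfl fun α _ => Finset.sum_congr rfl fun β _ => ?_
      simp only [colA]
      ring
    rw [e1, e2]
    have hFB : ∀ B : Fin (2*n+1),
        F⁻¹ A'.castSucc B.castSucc * F B.castSucc C.castSucc
        = F⁻¹ A'.castSucc B.castSucc *
            (∑ α : Fin n, ∑ β : Fin n, g α β * (lam C (colH α) * lam B (colA β)))
          + F⁻¹ A'.castSucc B.castSucc *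
            (∑ α : Fin n, ∑ β : Fin n, g α β * (lam B (colH α) * lam C (colA β)))
          + F⁻¹ A'.castSucc B.castSucc * (lam B col0 * σ C)
          + F⁻¹ A'.castSucc B.castSucc * (lam C col0 * σ B) := by
      intro B
      rw [hF1]
      have hsplit : (∑ α : Fin n, ∑ β : Fin n,
          g α β * (lam B (colH α) * lam C (colA β) + lam C (colH α) * lam B (colA β)))
          = (∑ α : Fin n, ∑ β : Fin n, g α β * (lam C (colH α) * lam B (colA β)))
            + (∑ α : Fin n, ∑ β : Fin n, g α β * (lam B (colH α) * lam C (colA β))) := by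
        rw [← Finset.sum_add_distrib]
        refine Finset.sum_congr rfl fun α _ => ?_
        rw [← Finset.sum_add_distrib]
        refine Finset.sum_congr rfl fun β _ => ?_
        ring
      rw [hsplit]
      ring
    have expand : (∑ B : Fin (2*n+1), F⁻¹ A'.castSucc B.castSucc * F B.castSucc C.castSucc)
        = (∑ B : Fin (2*n+1), F⁻¹ A'.castSucc B.castSucc *
            (∑ α : Fin n, ∑ β : Fin n, g α β * (lam C (colH α) * lam B (colA β))))
          + (∑ B : Fin (2*n+1), F⁻¹ A'.castSucc B.castSucc *
            (∑ α : Fin n, ∑ β : Fin n, g α β * (lam B (colH α) * lam C (colA β))))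
          + σ C * (∑ B : Fin (2*n+1), F⁻¹ A'.castSucc B.castSucc * lam B col0)
          + lam C col0 * (∑ B : Fin (2*n+1), F⁻¹ A'.castSucc B.castSucc * σ B) := by
      have expand0 : (∑ B : Fin (2*n+1), F⁻¹ A'.castSucc B.castSucc * F B.castSucc C.castSucc)
          = ∑ B : Fin (2*n+1),
              (F⁻¹ A'.castSucc B.castSucc *
                (∑ α : Fin n, ∑ β : Fin n, g α β * (lam C (colH α) * lam B (colA β)))
              + F⁻¹ A'.castSucc B.castSucc *
                (∑ α : Fin n, ∑ β : Fin n, g α β * (lam B (colH α) * lam C (colA β)))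
              + F⁻¹ A'.castSucc B.castSucc * (lam B col0 * σ C)
              + F⁻¹ A'.castSucc B.castSucc * (lam C col0 * σ B)) :=
        Finset.sum_congr rfl fun B _ => hFB B
      have expand2 : ∑ B : Fin (2*n+1), F⁻¹ A'.castSucc B.castSucc * (lam B col0 * σ C)
          = σ C * ∑ B : Fin (2*n+1), F⁻¹ A'.castSucc B.castSucc * lam B col0 := by
        rw [Finset.mul_sum]
        exact Finset.sum_congr rfl fun B _ => by ring
      have expand3 : ∑ B : Fin (2*n+1), F⁻¹ A'.castSucc B.castSucc * (lam C col0 * σ B)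
          = lam C col0 * ∑ B : Fin (2*n+1), F⁻¹ A'.castSucc B.castSucc * σ B := by
        rw [Finset.mul_sum]
        exact Finset.sum_congr rfl fun B _ => by ring
      rw [expand0, Finset.sum_add_distrib, Finset.sum_add_distrib, Finset.sum_add_distrib,
        expand2, expand3]
    rw [Matrix.one_apply]
    linear_combination key1 A' C - expand - σ C * key2 A'
  -- uniqueness of the inverse
  set T : Matrix (FefCol n) (Fin (2*n+1)) ℂ := (Matrix.of mu)ᵀ with hTdef
  have hT : lam * T = 1 := by
    ext C A'
    rw [Matrix.mul_apply, Matrix.one_apply]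
    simp only [hTdef, Matrix.transpose_apply, Matrix.of_apply]
    rw [hmu A' C]
    simp [eq_comm]
  have hTM : T = M := by
    calc T = (mu0 * lam) * T := by rw [hmu0r, Matrix.one_mul]
      _ = mu0 * (lam * T) := Matrix.mul_assoc _ _ _
      _ = mu0 := by rw [hT, Matrix.mul_one]
      _ = (mu0 * lam) * M := by rw [Matrix.mul_assoc, hM, Matrix.mul_one]
      _ = M := by rw [hmu0r, Matrix.one_mul]
  have hval : ∀ D : FefCol n, mu A D = M D A := fun D => by
    have := congrFun (congrFun hTM D) A
    simpa [hTdef] using this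
  refine ⟨hval col0, fun α => hval (colH α), fun β => hval (colA β)⟩
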